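/- arXiv:1604.00655 — 3 statements merged into one kernel-verified Lean document; each statement's English description precedes it below -/
import Mathlib

section
/- (Converse Algebraic Stability) Let M and N be interval decomposable ℝ^n-indexed persistence modules and ε ≥ 0. If there exists an ε-matching between the barcodes B(M) and B(N), then M and N are ε-interleaved. Consequently, d_I(M,N) ≤ d_b(B(M),B(N)). -/
open scoped DirectSum ENNReal

namespace PersStab

/-- A persistence module indexed by a preordered set `P`, with values in
`K`-vector spaces. -/
structure PersMod (K : Type) [Field K] (P : Type) [Preorder P] where
  V : P → Type
  [acg : ∀ a, AddCommGroup (V a)]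
  [mod : ∀ a, Module K (V a)]
  map : ∀ {a b : P}, a ≤ b → (V a →ₗ[K] V b)
  map_id : ∀ a : P, map (le_refl a) = LinearMap.id
  map_comp : ∀ {a b c : P} (h₁ : a ≤ b) (h₂ : b ≤ c),
    map (h₁.trans h₂) = (map h₂).comp (map h₁)

attribute [instance] PersMod.acg PersMod.mod

variable {K : Type} [Field K] {P : Type} [Preorder P]

/-- Pointwise finite dimensional. -/
def PersMod.pfd (M : PersMod K P) : Prop := ∀ a, FiniteDimensional K (M.V a)

/-- A morphism of persistence modules (a natural transformation). -/
structure PersHom (M N : PersMod K P) where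
  app : ∀ a, M.V a →ₗ[K] N.V a
  natural : ∀ {a b : P} (h : a ≤ b), (app b).comp (M.map h) = (N.map h).comp (app a)

/-- An isomorphism of persistence modules. -/
structure PersIso (M N : PersMod K P) where
  e : ∀ a, M.V a ≃ₗ[K] N.V a
  natural : ∀ {a b : P} (h : a ≤ b) (m : M.V a), e b (M.map h m) = N.map h (e a m)

/-- Convexity: the second defining property of an interval in a poset. -/
def IsConvexIn (J : Set P) : Prop :=
  ∀ ⦃a b c : P⦄, a ∈ J → c ∈ J → a ≤ b → b ≤ c → b ∈ J

/-- Connectivity: the third defining property of an interval in a poset: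
any two points are joined by a finite zigzag of comparable points inside `J`. -/
def IsConnectedIn (J : Set P) : Prop :=
  ∀ a ∈ J, ∀ c ∈ J, ∃ (n : ℕ) (f : Fin (n + 1) → P),
    f 0 = a ∧ f (Fin.last n) = c ∧ (∀ k, f k ∈ J) ∧
    ∀ k : Fin n, f k.castSucc ≤ f k.succ ∨ f k.succ ≤ f k.castSucc

/-- An interval in a poset: nonempty, convex and connected. -/
structure IsInterval (J : Set P) : Prop where
  nonempty : J.Nonempty
  convex : IsConvexIn J
  connected : IsConnectedIn J

-- The structure map of an interval module: the identity `K → K` if the source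
-- lies in the interval, and `0` otherwise.
open Classical in
noncomputable def ivMap (K : Type) [Field K] (J : Set P) (a c : P) :
    (PLift (a ∈ J) → K) →ₗ[K] (PLift (c ∈ J) → K) where
  toFun v _ := if h : a ∈ J then v ⟨h⟩ else 0
  map_add' u v := by
    funext hc
    by_cases h : a ∈ J <;> simp [h]
  map_smul' r v := by
    funext hc
    by_cases h : a ∈ J <;> simp [h]

/-- The interval module `I^J` of a convex set `J`: one-dimensional (a copy of `K`)
at points of `J`, zero elsewhere, with identity internal maps inside `J`. -/
noncomputable def intervalModule (K : Type) [Field K] (J : Set P) (hJ : IsConvexIn J) :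
    PersMod K P where
  V a := PLift (a ∈ J) → K
  map {a c} _ := ivMap K J a c
  map_id a := by
    refine LinearMap.ext fun v => funext fun hc => ?_
    obtain ⟨hc⟩ := hc
    simp only [ivMap, LinearMap.coe_mk, AddHom.coe_mk, LinearMap.id_coe, id_eq]
    rw [dif_pos hc]
  map_comp {a b c} h₁ h₂ := by
    refine LinearMap.ext fun v => funext fun hc => ?_
    simp only [ivMap, LinearMap.coe_mk, AddHom.coe_mk, LinearMap.coe_comp,
      Function.comp_apply]
    by_cases ha : a ∈ J
    · have hb : b ∈ J := hJ ha hc.down h₁ h₂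
      simp [ha, hb]
    · simp [ha]

/-- A decomposition of the persistence module `M` as a direct sum of interval
modules `I^{B i}`, `i : ι`, where all the sets `B i` satisfy the predicate `pred`.
The multiset `{B i | i : ι}` is the barcode of `M`. -/
structure DecompOver (pred : Set P → Prop) (M : PersMod K P) where
  ι : Type
  B : ι → Set P
  mem : ∀ i, pred (B i)
  equiv : ∀ a : P, M.V a ≃ₗ[K] (Π₀ i : ι, (PLift (a ∈ B i) → K))
  natural : ∀ {a c : P} (h : a ≤ c) (m : M.V a),
    equiv c (M.map h m) =
      DFinsupp.mapRange.linearMap (fun i => ivMap K (B i) a c) (equiv a m)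

/-- A matching between two multisets, presented as indexed families: a bijection
between a subset (the coimage) of the index set `ι` and a subset (the image) of
the index set `κ`. -/
structure Matching (ι κ : Type) : Type where
  R : ι → κ → Prop
  functional : ∀ {i j j'}, R i j → R i j' → j = j'
  injective : ∀ {i i' j}, R i j → R i' j → i = i'

section Shift

variable (sh : ℝ → P → P)

/-- `M` is `δ`-trivial (with respect to the shift `sh`): all internal maps
from `p` to the `δ`-shift of `p` vanish. -/
def ETrivial (M : PersMod K P) (δ : ℝ) : Prop :=
  ∀ (p : P) (h : p ≤ sh δ p), M.map h = 0

/-- The data `(f, g)` is an `ε`-interleaving between `M` and `N`: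
`f : M → N(ε)` and `g : N → M(ε)` are natural, and the two composites agree with
the `2ε`-shift morphisms of `M` and `N`. -/
structure IsInterleaving (ε : ℝ) (M N : PersMod K P)
    (f : ∀ p, M.V p →ₗ[K] N.V (sh ε p)) (g : ∀ p, N.V p →ₗ[K] M.V (sh ε p)) : Prop where
  nat_f : ∀ {p q : P} (h : p ≤ q) (h' : sh ε p ≤ sh ε q),
    (f q).comp (M.map h) = (N.map h').comp (f p)
  nat_g : ∀ {p q : P} (h : p ≤ q) (h' : sh ε p ≤ sh ε q),
    (g q).comp (N.map h) = (M.map h').comp (g p)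
  gf : ∀ (p : P) (h : p ≤ sh ε (sh ε p)), (g (sh ε p)).comp (f p) = M.map h
  fg : ∀ (p : P) (h : p ≤ sh ε (sh ε p)), (f (sh ε p)).comp (g p) = N.map h

/-- `M` and `N` are `ε`-interleaved. -/
def Interleaved (ε : ℝ) (M N : PersMod K P) : Prop :=
  0 ≤ ε ∧ ∃ f g, IsInterleaving sh ε M N f g

/-- The interleaving distance, valued in `ℝ≥0∞`. -/
noncomputable def dI (M N : PersMod K P) : ℝ≥0∞ :=
  ⨅ ε : {e : ℝ // Interleaved sh e M N}, ENNReal.ofReal ε.1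

/-- `σ` is an `ε`-matching between the barcodes `{A i}` and `{C j}`:
every interval of either barcode which is not `2ε`-trivial is matched, and
matched intervals have `ε`-interleaved interval modules. -/
def IsEpsMatching (K : Type) [Field K] (ε : ℝ) {ι κ : Type}
    (A : ι → Set P) (hA : ∀ i, IsConvexIn (A i))
    (C : κ → Set P) (hC : ∀ j, IsConvexIn (C j)) (σ : Matching ι κ) : Prop :=
  (∀ i, ¬ ETrivial sh (intervalModule K (A i) (hA i)) (2 * ε) → ∃ j, σ.R i j) ∧
  (∀ j, ¬ ETrivial sh (intervalModule K (C j) (hC j)) (2 * ε) → ∃ i, σ.R i j) ∧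
  (∀ i j, σ.R i j →
    Interleaved sh ε (intervalModule K (A i) (hA i)) (intervalModule K (C j) (hC j)))

/-- The bottleneck distance between two barcodes, valued in `ℝ≥0∞`. -/
noncomputable def dB (K : Type) [Field K] {ι κ : Type}
    (A : ι → Set P) (hA : ∀ i, IsConvexIn (A i))
    (C : κ → Set P) (hC : ∀ j, IsConvexIn (C j)) : ℝ≥0∞ :=
  ⨅ e : {e : ℝ // 0 ≤ e ∧ ∃ σ : Matching ι κ, IsEpsMatching sh K e A hA C hC σ},
    ENNReal.ofReal e.1

end Shift

end PersStab
namespace PersStab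

/-! ### `ℝⁿ`-indexed persistence modules -/

/-- The `ε`-shift on `ℝⁿ`: `a ↦ a + (ε, …, ε)`. -/
def shfV (n : ℕ) (ε : ℝ) (v : Fin n → ℝ) : Fin n → ℝ := fun k => v k + ε

end PersStab
namespace PersStab


/-! ### Auxiliary machinery -/

/-- The transpose of a matching. -/
def Matching.symm' {ι κ : Type} (σ : Matching ι κ) : Matching κ ι where
  R j i := σ.R i j
  functional h h' := σ.injective h h'
  injective h h' := σ.functional h h'

lemma Matching.symm'_symm' {ι κ : Type} (σ : Matching ι κ) : σ.symm'.symm' = σ := rfl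

section MMap

open Classical

variable {K : Type} [Field K] {ι κ : Type} [DecidableEq ι] [DecidableEq κ]
variable {α : ι → Type} {β : κ → Type} {γ : ι → Type}
variable [∀ i, AddCommGroup (α i)] [∀ i, Module K (α i)]
variable [∀ j, AddCommGroup (β j)] [∀ j, Module K (β j)]
variable [∀ i, AddCommGroup (γ i)] [∀ i, Module K (γ i)]

/-- The morphism of direct sums induced by a matching together with
componentwise maps along matched pairs. -/
noncomputable def mmap (σ : Matching ι κ) (φ : ∀ i j, σ.R i j → (α i →ₗ[K] β j)) :
    (Π₀ i, α i) →ₗ[K] (Π₀ j, β j) :=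
  DFinsupp.lsum ℕ fun i =>
    if h : ∃ j, σ.R i j then
      (DFinsupp.lsingle h.choose).comp (φ i h.choose h.choose_spec) else 0

lemma mmap_single (σ : Matching ι κ) (φ : ∀ i j, σ.R i j → (α i →ₗ[K] β j)) (i : ι) (x : α i) :
    mmap σ φ (DFinsupp.single i x) =
      if h : ∃ j, σ.R i j then DFinsupp.single h.choose (φ i h.choose h.choose_spec x)
      else 0 := by
  rw [mmap, DFinsupp.lsum_single]
  by_cases h : ∃ j, σ.R i j
  · rw [dif_pos h, dif_pos h]; rfl
  · rw [dif_neg h, dif_neg h]; rfl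

lemma mmap_comp_mapRange (σ : Matching ι κ) (φ : ∀ i j, σ.R i j → (α i →ₗ[K] β j))
    (g : ∀ i, γ i →ₗ[K] α i) :
    (mmap σ φ).comp (DFinsupp.mapRange.linearMap g) =
      mmap σ (fun i j h => (φ i j h).comp (g i)) := by
  refine DFinsupp.lhom_ext' fun i => LinearMap.ext fun x => ?_
  simp only [LinearMap.comp_apply, DFinsupp.lsingle_apply,
    DFinsupp.mapRange.linearMap_apply, DFinsupp.mapRange_single, mmap_single]

lemma mapRange_comp_mmap (σ : Matching ι κ) (φ : ∀ i j, σ.R i j → (α i →ₗ[K] β j))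
    {δ : κ → Type} [∀ j, AddCommGroup (δ j)] [∀ j, Module K (δ j)]
    (g : ∀ j, β j →ₗ[K] δ j) :
    (DFinsupp.mapRange.linearMap g).comp (mmap σ φ) =
      mmap σ (fun i j h => (g j).comp (φ i j h)) := by
  refine DFinsupp.lhom_ext' fun i => LinearMap.ext fun x => ?_
  simp only [LinearMap.comp_apply, DFinsupp.lsingle_apply, mmap_single]
  by_cases h : ∃ j, σ.R i j
  · rw [dif_pos h, dif_pos h]
    simp [DFinsupp.mapRange.linearMap_apply, DFinsupp.mapRange_single]
  · rw [dif_neg h, dif_neg h]; simp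

lemma mmap_congr (σ : Matching ι κ) {φ ψ : ∀ i j, σ.R i j → (α i →ₗ[K] β j)}
    (h : ∀ i j hr, φ i j hr = ψ i j hr) : mmap σ φ = mmap σ ψ := by
  refine DFinsupp.lhom_ext' fun i => LinearMap.ext fun x => ?_
  simp only [LinearMap.comp_apply, DFinsupp.lsingle_apply, mmap_single]
  by_cases hc : ∃ j, σ.R i j
  · rw [dif_pos hc, dif_pos hc, h]
  · rw [dif_neg hc, dif_neg hc]

lemma mmap_comp_mmap (σ : Matching ι κ)
    (φ : ∀ i j, σ.R i j → (α i →ₗ[K] β j))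
    (ψ : ∀ j i, σ.R i j → (β j →ₗ[K] γ i))
    (θ : ∀ i, α i →ₗ[K] γ i)
    (hcomp : ∀ i j (h : σ.R i j), (ψ j i h).comp (φ i j h) = θ i)
    (h0 : ∀ i, (¬ ∃ j, σ.R i j) → θ i = 0) :
    (mmap σ.symm' ψ).comp (mmap σ φ) = DFinsupp.mapRange.linearMap θ := by
  refine DFinsupp.lhom_ext' fun i => LinearMap.ext fun x => ?_
  simp only [LinearMap.comp_apply, DFinsupp.lsingle_apply, mmap_single,
    DFinsupp.mapRange.linearMap_apply, DFinsupp.mapRange_single]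
  by_cases h : ∃ j, σ.R i j
  · rw [dif_pos h, mmap_single σ.symm' ψ]
    have hj : σ.R i h.choose := h.choose_spec
    have hex : ∃ i', σ.symm'.R h.choose i' := ⟨i, hj⟩
    rw [dif_pos hex]
    have e : hex.choose = i := σ.injective hex.choose_spec hj
    have key : ∀ (i' : ι) (e' : i' = i) (h' : σ.R i' h.choose),
        DFinsupp.single i' (ψ h.choose i' h' (φ i h.choose hj x)) =
        DFinsupp.single i (ψ h.choose i hj (φ i h.choose hj x)) := by
      rintro i' rfl h'; rfl
    rw [key hex.choose e hex.choose_spec]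
    rw [show ψ h.choose i hj (φ i h.choose hj x) = θ i x from
      DFunLike.congr_fun (hcomp i h.choose hj) x]
  · rw [dif_neg h, map_zero, h0 i h]
    simp

end MMap

lemma shfV_shfV (n : ℕ) (ε : ℝ) (p : Fin n → ℝ) :
    shfV n ε (shfV n ε p) = shfV n (2 * ε) p := by
  funext k; simp only [shfV]; ring

/-- The interleaving built from an `ε`-matching. -/
theorem interleaving_of_matching
    (K : Type) [Field K] (n : ℕ) (ε : ℝ) (hε : 0 ≤ ε)
    (M N : PersMod K (Fin n → ℝ))
    (DM : DecompOver IsInterval M) (DN : DecompOver IsInterval N)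
    (σ : Matching DM.ι DN.ι)
    (hσ : IsEpsMatching (shfV n) K ε DM.B (fun i => (DM.mem i).convex)
      DN.B (fun j => (DN.mem j).convex) σ) :
    Interleaved (shfV n) ε M N := by
  classical
  obtain ⟨hAm, hCm, hmatch⟩ := hσ
  choose fij gij hfg using fun i j (hr : σ.R i j) => (hmatch i j hr).2
  let F : ∀ p : Fin n → ℝ,
      (Π₀ i, (PLift (p ∈ DM.B i) → K)) →ₗ[K] (Π₀ j, (PLift (shfV n ε p ∈ DN.B j) → K)) :=
    fun p => mmap σ (fun i j hh => fij i j hh p)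
  let G : ∀ p : Fin n → ℝ,
      (Π₀ j, (PLift (p ∈ DN.B j) → K)) →ₗ[K] (Π₀ i, (PLift (shfV n ε p ∈ DM.B i) → K)) :=
    fun p => mmap σ.symm' (fun j i hh => gij i j hh p)
  have hFnat : ∀ (p q : Fin n → ℝ) (h : p ≤ q) (h' : shfV n ε p ≤ shfV n ε q),
      (F q).comp (DFinsupp.mapRange.linearMap fun i => ivMap K (DM.B i) p q) =
      (DFinsupp.mapRange.linearMap
        fun j => ivMap K (DN.B j) (shfV n ε p) (shfV n ε q)).comp (F p) := by
    intro p q h h'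
    exact (mmap_comp_mapRange σ (fun i j hr => fij i j hr q)
        (fun i => ivMap K (DM.B i) p q)).trans
      ((mmap_congr σ (fun i j hr => (hfg i j hr).nat_f h h')).trans
        (mapRange_comp_mmap σ (fun i j hr => fij i j hr p)
          (fun j => ivMap K (DN.B j) (shfV n ε p) (shfV n ε q))).symm)
  have hGnat : ∀ (p q : Fin n → ℝ) (h : p ≤ q) (h' : shfV n ε p ≤ shfV n ε q),
      (G q).comp (DFinsupp.mapRange.linearMap fun j => ivMap K (DN.B j) p q) =
      (DFinsupp.mapRange.linearMap
        fun i => ivMap K (DM.B i) (shfV n ε p) (shfV n ε q)).comp (G p) := by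
    intro p q h h'
    exact (mmap_comp_mapRange σ.symm' (fun j i hr => gij i j hr q)
        (fun j => ivMap K (DN.B j) p q)).trans
      ((mmap_congr σ.symm' (fun j i hr => (hfg i j hr).nat_g h h')).trans
        (mapRange_comp_mmap σ.symm' (fun j i hr => gij i j hr p)
          (fun i => ivMap K (DM.B i) (shfV n ε p) (shfV n ε q))).symm)
  have hGF : ∀ (p : Fin n → ℝ) (hp : p ≤ shfV n ε (shfV n ε p)),
      (G (shfV n ε p)).comp (F p) = DFinsupp.mapRange.linearMap
        (fun i => ivMap K (DM.B i) p (shfV n ε (shfV n ε p))) := by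
    intro p hp
    refine mmap_comp_mmap σ _ _ _ (fun i j hr => (hfg i j hr).gf p hp) ?_
    intro i h0
    have htriv : ETrivial (shfV n)
        (intervalModule K (DM.B i) (DM.mem i).convex) (2 * ε) :=
      not_not.mp (fun hc => h0 (hAm i hc))
    have key := shfV_shfV n ε p
    have h2 : p ≤ shfV n (2 * ε) p := key ▸ hp
    have h3 := htriv p h2
    rw [key]
    exact h3
  have hFG : ∀ (p : Fin n → ℝ) (hp : p ≤ shfV n ε (shfV n ε p)),
      (F (shfV n ε p)).comp (G p) = DFinsupp.mapRange.linearMap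
        (fun j => ivMap K (DN.B j) p (shfV n ε (shfV n ε p))) := by
    intro p hp
    refine mmap_comp_mmap σ.symm' (fun j i hr => gij i j hr p)
      (fun i j hr => fij i j hr (shfV n ε p)) _
      (fun j i hr => (hfg i j hr).fg p hp) ?_
    intro j h0
    have h0' : ¬ ∃ i, σ.R i j := fun ⟨i, hi⟩ => h0 ⟨i, hi⟩
    have htriv : ETrivial (shfV n)
        (intervalModule K (DN.B j) (DN.mem j).convex) (2 * ε) :=
      not_not.mp (fun hc => h0' (hCm j hc))
    have key := shfV_shfV n ε p
    have h2 : p ≤ shfV n (2 * ε) p := key ▸ hp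
    have h3 := htriv p h2
    rw [key]
    exact h3
  refine ⟨hε,
    fun p => ((DN.equiv (shfV n ε p)).symm.toLinearMap.comp (F p)).comp
      (DM.equiv p).toLinearMap,
    fun p => ((DM.equiv (shfV n ε p)).symm.toLinearMap.comp (G p)).comp
      (DN.equiv p).toLinearMap, ?_, ?_, ?_, ?_⟩
  · intro p q h h'
    refine LinearMap.ext fun m => ?_
    simp only [LinearMap.coe_comp, Function.comp_apply, LinearEquiv.coe_coe]
    rw [DM.natural h m]
    have hsq := DFunLike.congr_fun (hFnat p q h h') (DM.equiv p m)
    simp only [LinearMap.coe_comp, Function.comp_apply] at hsq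
    rw [hsq]
    have h4 := DN.natural h' ((DN.equiv (shfV n ε p)).symm (F p (DM.equiv p m)))
    rw [LinearEquiv.apply_symm_apply] at h4
    rw [← h4, LinearEquiv.symm_apply_apply]
  · intro p q h h'
    refine LinearMap.ext fun m => ?_
    simp only [LinearMap.coe_comp, Function.comp_apply, LinearEquiv.coe_coe]
    rw [DN.natural h m]
    have hsq := DFunLike.congr_fun (hGnat p q h h') (DN.equiv p m)
    simp only [LinearMap.coe_comp, Function.comp_apply] at hsq
    rw [hsq]
    have h4 := DM.natural h' ((DM.equiv (shfV n ε p)).symm (G p (DN.equiv p m)))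
    rw [LinearEquiv.apply_symm_apply] at h4
    rw [← h4, LinearEquiv.symm_apply_apply]
  · intro p hp
    refine LinearMap.ext fun m => ?_
    simp only [LinearMap.coe_comp, Function.comp_apply, LinearEquiv.coe_coe]
    rw [LinearEquiv.apply_symm_apply]
    have hsq := DFunLike.congr_fun (hGF p hp) (DM.equiv p m)
    simp only [LinearMap.coe_comp, Function.comp_apply] at hsq
    rw [hsq, ← DM.natural hp m, LinearEquiv.symm_apply_apply]
  · intro p hp
    refine LinearMap.ext fun m => ?_
    simp only [LinearMap.coe_comp, Function.comp_apply, LinearEquiv.coe_coe]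
    rw [LinearEquiv.apply_symm_apply]
    have hsq := DFunLike.congr_fun (hFG p hp) (DN.equiv p m)
    simp only [LinearMap.coe_comp, Function.comp_apply] at hsq
    rw [hsq, ← DN.natural hp m, LinearEquiv.symm_apply_apply]

/-- **Converse Algebraic Stability.**
If `M` and `N` are interval decomposable `ℝⁿ`-indexed persistence modules and
there exists an `ε`-matching between their barcodes, then `M` and `N` are
`ε`-interleaved.  Consequently `d_I(M,N) ≤ d_b(B(M),B(N))`. -/
theorem converse_algebraic_stability
    (K : Type) [Field K] (n : ℕ) (ε : ℝ) (hε : 0 ≤ ε)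
    (M N : PersMod K (Fin n → ℝ))
    (DM : DecompOver IsInterval M) (DN : DecompOver IsInterval N)
    (σ : Matching DM.ι DN.ι)
    (hσ : IsEpsMatching (shfV n) K ε DM.B (fun i => (DM.mem i).convex)
      DN.B (fun j => (DN.mem j).convex) σ) :
    Interleaved (shfV n) ε M N ∧
    dI (shfV n) M N ≤
      dB (shfV n) K DM.B (fun i => (DM.mem i).convex)
        DN.B (fun j => (DN.mem j).convex) := by
  refine ⟨interleaving_of_matching K n ε hε M N DM DN σ hσ, le_iInf fun e => ?_⟩
  obtain ⟨e, he0, σ', hσ'⟩ := e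
  exact iInf_le_of_le ⟨e, interleaving_of_matching K n e he0 M N DM DN σ' hσ'⟩ le_rfl

end PersStab
end

section
/- Let f : M → N be a morphism of ℝ²-indexed persistence modules, ε ≥ 0, and let f₁ : im f ↪ L^ε(f) and f₂ : L^ε(f) ↪ N be the canonical inclusions. Then: (i) the cokernel of f₁ is ε·e₁-trivial; (ii) if the cokernel of f is ε-trivial, then the cokernel of f₂ is ε·e₂-trivial. -/
open scoped DirectSum ENNReal

namespace PersStab

/-! ### `ℝ²`-indexed persistence modules (product order on `ℝ × ℝ`) -/

variable {K : Type} [Field K]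

/-- The diagonal `ε`-shift on `ℝ²`. -/
def shf2 (ε : ℝ) (p : ℝ × ℝ) : ℝ × ℝ := p + (ε, ε)

/-- The standard basis vectors of `ℝ²`. -/
def e1 : ℝ × ℝ := (1, 0)
def e2 : ℝ × ℝ := (0, 1)

lemma le_add_e1 {ε : ℝ} (hε : 0 ≤ ε) (a : ℝ × ℝ) : a ≤ a + ε • e1 := by
  refine Prod.le_def.2 ⟨?_, ?_⟩
  · simp only [Prod.fst_add, Prod.smul_fst, e1, smul_eq_mul, mul_one]
    linarith
  · simp [e1]

lemma add_e1_mono {ε : ℝ} {a b : ℝ × ℝ} (h : a ≤ b) : a + ε • e1 ≤ b + ε • e1 :=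
  add_le_add h le_rfl

/-- A free `ℝ²`-indexed module is a direct sum of interval modules on
principal up-sets `⟨v⟩ = {w : v ≤ w}`. -/
def IsFree {P : Type} [Preorder P] (M : PersMod K P) : Prop :=
  Nonempty (DecompOver (fun J => ∃ v, J = Set.Ici v) M)

lemma Ici_convex {P : Type} [Preorder P] (v : P) : IsConvexIn (Set.Ici v) :=
  fun _ _ _ ha _ hab _ => le_trans ha hab

/-- The underlying submodule of the interpolant `L^ε(f)` at index `a`:
`{n ∈ N_a : φ_N(a, a + ε·e₁)(n) ∈ im f}`. -/
noncomputable def interpolantSub {M N : PersMod K (ℝ × ℝ)} {ε : ℝ} (hε : 0 ≤ ε)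
    (f : PersHom M N) (a : ℝ × ℝ) : Submodule K (N.V a) :=
  Submodule.comap (N.map (le_add_e1 hε a)) (LinearMap.range (f.app (a + ε • e1)))

/-- The defining membership condition of the interpolant `L^ε(f)` is preserved
by the internal maps of `N`. -/
lemma interpolant_mem {M N : PersMod K (ℝ × ℝ)} {ε : ℝ} (hε : 0 ≤ ε) (f : PersHom M N)
    {a b : ℝ × ℝ} (h : a ≤ b) :
    ∀ x ∈ interpolantSub hε f a, N.map h x ∈ interpolantSub hε f b := by
  simp only [interpolantSub, Submodule.mem_comap]
  intro x hx
  obtain ⟨m, hm⟩ := hx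
  have h' : a + ε • e1 ≤ b + ε • e1 := add_e1_mono h
  refine ⟨M.map h' m, ?_⟩
  have hnat := LinearMap.congr_fun (f.natural h') m
  simp only [LinearMap.coe_comp, Function.comp_apply] at hnat
  rw [hnat, hm]
  rw [← LinearMap.comp_apply, ← N.map_comp (le_add_e1 hε a) h',
    ← LinearMap.comp_apply (N.map (le_add_e1 hε b)), ← N.map_comp h (le_add_e1 hε b)]

/-- The interpolant `L^ε(f)` of a morphism `f : M → N` of `ℝ²`-indexed modules:
the submodule of `N` given by
`L^ε(f)_a = {n ∈ N_a : φ_N(a, a + ε·e₁)(n) ∈ im f}`. -/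
noncomputable def interpolant {M N : PersMod K (ℝ × ℝ)} {ε : ℝ} (hε : 0 ≤ ε)
    (f : PersHom M N) : PersMod K (ℝ × ℝ) where
  V a := interpolantSub hε f a
  map {a b} h := LinearMap.restrict (N.map h) (interpolant_mem hε f h)
  map_id a := by
    refine LinearMap.ext fun m => Subtype.ext ?_
    simp only [LinearMap.restrict_apply, LinearMap.id_coe, id_eq]
    rw [N.map_id]
    rfl
  map_comp {a b c} h₁ h₂ := by
    refine LinearMap.ext fun m => Subtype.ext ?_
    simp only [LinearMap.restrict_apply, LinearMap.coe_comp, Function.comp_apply]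
    rw [N.map_comp h₁ h₂]
    rfl

end PersStab
namespace PersStab

lemma app_cast {P : Type} [Preorder P] {K : Type} [Field K] {M N : PersMod K P}
    (f : PersHom M N) {p q : P} (e : p = q) (m : M.V p) :
    f.app q (e ▸ m) = e ▸ (f.app p m) := by subst e; rfl

lemma map_cast {P : Type} [Preorder P] {K : Type} [Field K] (N : PersMod K P)
    {a p q : P} (e : p = q) (hp : a ≤ p) (hq : a ≤ q) (n : N.V a) :
    N.map hq n = e ▸ (N.map hp n) := by subst e; rfl

/-- Let `f : M → N` be a morphism of `ℝ²`-indexed persistence modules, `ε ≥ 0`,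
and let `f₁ : im f ↪ L^ε(f)` and `f₂ : L^ε(f) ↪ N` be the canonical inclusions.
Then: (i) the cokernel of `f₁` is `ε·e₁`-trivial; (ii) if the cokernel of `f` is
`ε`-trivial, then the cokernel of `f₂` is `ε·e₂`-trivial.

(The cokernel of the inclusion of a submodule-functor `W ⊆ N` is `u`-trivial
precisely when, for every index `a` and every `n ∈ N_a`, the element
`φ_N(a, a+u)(n)` lies in `W_{a+u}`; both statements below are phrased this way.) -/
theorem interpolant_factorization_triviality
    (K : Type) [Field K] (ε : ℝ) (hε : 0 ≤ ε)
    (M N : PersMod K (ℝ × ℝ)) (f : PersHom M N) :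
    -- (i) the cokernel of `im f ↪ L^ε(f)` is `ε·e₁`-trivial
    (∀ (a : ℝ × ℝ) (x : N.V a), x ∈ interpolantSub hε f a →
      N.map (le_add_e1 hε a) x ∈ LinearMap.range (f.app (a + ε • e1))) ∧
    -- (ii) if coker f is ε-trivial then the cokernel of `L^ε(f) ↪ N` is `ε·e₂`-trivial
    ((∀ (a : ℝ × ℝ) (h : a ≤ shf2 ε a) (n : N.V a),
        ∃ m : M.V (shf2 ε a), f.app (shf2 ε a) m = N.map h n) →
      ∀ (a : ℝ × ℝ) (h : a ≤ a + ε • e2) (n : N.V a),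
        N.map h n ∈ interpolantSub hε f (a + ε • e2)) := by
  constructor
  · intro a x hx
    exact hx
  · intro H a h n
    have key : a + ε • e2 + ε • e1 = shf2 ε a := by
      simp [e1, e2, shf2, Prod.ext_iff]
    have h2 : a + ε • e2 ≤ a + ε • e2 + ε • e1 := le_add_e1 hε _
    have h' : a ≤ shf2 ε a := key ▸ (h.trans h2)
    obtain ⟨m, hm⟩ := H a h' n
    simp only [interpolantSub, Submodule.mem_comap, LinearMap.mem_range]
    refine ⟨key.symm ▸ m, ?_⟩
    rw [app_cast f key.symm m, hm, ← LinearMap.comp_apply, ← N.map_comp h h2]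
    exact (map_cast N key.symm h' (h.trans h2) n).symm
  

end PersStab
end

section
/- (Induced Matching Theorem for Free 2-D Modules) Let f : M → N be a monomorphism of pointwise finite dimensional free ℝ²-indexed persistence modules with ε-trivial cokernel. Then there exists a bijective matching χ : B(M) ↛ B(N) such that for each ⟨b⟩ ∈ B(M), χ(⟨b⟩) = ⟨b′⟩ where b_i − ε ≤ b′_i ≤ b_i for i ∈ {1,2}. -/
open scoped DirectSum ENNReal

namespace PersStab

variable {K : Type} [Field K] {P : Type} [Preorder P]

section
variable (sh : ℝ → P → P)

/-- The kernel of a morphism `f : M → N(ε)` is `δ`-trivial. -/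
def KerTrivialSh (ε δ : ℝ) (M N : PersMod K P)
    (f : ∀ p, M.V p →ₗ[K] N.V (sh ε p)) : Prop :=
  ∀ (p : P) (h : p ≤ sh δ p) (m : M.V p), f p m = 0 → M.map h m = 0

/-- The cokernel of a morphism `f : M → N(ε)` is `δ`-trivial. -/
def CokerTrivialSh (ε δ : ℝ) (M N : PersMod K P)
    (f : ∀ p, M.V p →ₗ[K] N.V (sh ε p)) : Prop :=
  ∀ (p : P) (h' : sh ε p ≤ sh ε (sh δ p)) (n : N.V (sh ε p)),
    ∃ m : M.V (sh δ p), f (sh δ p) m = N.map h' n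

/-- The kernel of a plain morphism `f : M → N` is `δ`-trivial. -/
def KerTrivial (δ : ℝ) {M N : PersMod K P} (f : PersHom M N) : Prop :=
  ∀ (p : P) (h : p ≤ sh δ p) (m : M.V p), f.app p m = 0 → M.map h m = 0

/-- The cokernel of a plain morphism `f : M → N` is `δ`-trivial. -/
def CokerTrivial (δ : ℝ) {M N : PersMod K P} (f : PersHom M N) : Prop :=
  ∀ (p : P) (h : p ≤ sh δ p) (n : N.V p),
    ∃ m : M.V (sh δ p), f.app (sh δ p) m = N.map h n

end

end PersStab
namespace PersStab

section InducedMatchingAux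

variable {K : Type} [Field K]

/-- Schröder–Bernstein for relations: two injections compatible with a relation
yield a bijection compatible with the relation. -/
lemma csb_rel {α β : Type} (R : α → β → Prop) (φ : α → β) (hφ : Function.Injective φ)
    (h1 : ∀ a, R a (φ a)) (ψ : β → α) (hψ : Function.Injective ψ) (h2 : ∀ b, R (ψ b) b) :
    ∃ e : α → β, Function.Bijective e ∧ ∀ a, R a (e a) := by
  classical
  let F : Set α →o Set α :=
    ⟨fun s => (ψ '' (φ '' s)ᶜ)ᶜ, fun s t hst => Set.compl_subset_compl.2
      (Set.image_mono (Set.compl_subset_compl.2 (Set.image_mono hst)))⟩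
  set A := OrderHom.lfp F with hAdef
  have hfix : (ψ '' (φ '' A)ᶜ)ᶜ = A := OrderHom.map_lfp F
  have hcomp : Aᶜ = ψ '' (φ '' A)ᶜ := by
    conv_lhs => rw [← hfix]
    exact compl_compl _
  have hmem : ∀ a, a ∉ A → ∃ b, b ∉ φ '' A ∧ ψ b = a := by
    intro a ha
    have h3 : a ∈ ψ '' (φ '' A)ᶜ := by rw [← hcomp]; exact ha
    obtain ⟨b, hb, hba⟩ := h3
    exact ⟨b, hb, hba⟩
  choose bf hb1 hb2 using hmem
  refine ⟨fun a => if h : a ∈ A then φ a else bf a h, ⟨?_, ?_⟩, ?_⟩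
  · intro a a' h
    dsimp only at h
    by_cases ha : a ∈ A <;> by_cases ha' : a' ∈ A
    · rw [dif_pos ha, dif_pos ha'] at h; exact hφ h
    · rw [dif_pos ha, dif_neg ha'] at h
      exact absurd (h ▸ Set.mem_image_of_mem φ ha) (hb1 a' ha')
    · rw [dif_neg ha, dif_pos ha'] at h
      exact absurd (h.symm ▸ Set.mem_image_of_mem φ ha') (hb1 a ha)
    · rw [dif_neg ha, dif_neg ha'] at h
      rw [← hb2 a ha, ← hb2 a' ha', h]
  · intro y
    by_cases hy : ψ y ∈ A
    · have hyim : y ∈ φ '' A := by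
        by_contra hc
        have h3 : ψ y ∈ ψ '' (φ '' A)ᶜ := Set.mem_image_of_mem ψ hc
        rw [← hcomp] at h3; exact h3 hy
      obtain ⟨a, haA, rfl⟩ := hyim
      exact ⟨a, by dsimp only; rw [dif_pos haA]⟩
    · refine ⟨ψ y, ?_⟩
      dsimp only
      rw [dif_neg hy]
      exact hψ (hb2 (ψ y) hy)
  · intro a
    dsimp only
    by_cases ha : a ∈ A
    · rw [dif_pos ha]; exact h1 a
    · rw [dif_neg ha]
      have := h2 (bf a ha)
      rwa [hb2 a ha] at this

open Classical in
lemma hall_aux {I J : Type} (ε : ℝ) (vI : I → ℝ × ℝ) (wJ : J → ℝ × ℝ)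
    (c : I → J → K) (d : J → I → K)
    (hc : ∀ i j, c i j ≠ 0 → wJ j ≤ vI i)
    (hd : ∀ j i, d j i ≠ 0 → vI i ≤ wJ j + (ε, ε))
    (key : ∀ (i i' : I) (F : Finset J), (∀ j, c i j ≠ 0 → d j i' ≠ 0 → j ∈ F) →
      ∑ j ∈ F, c i j * d j i' = if i = i' then 1 else 0)
    (nbfin : ∀ i, {j | wJ j ≤ vI i ∧ vI i ≤ wJ j + (ε, ε)}.Finite) :
    ∀ s : Finset I, s.card ≤ (s.biUnion fun i => (nbfin i).toFinset).card := by
  classical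
  intro s
  set T := s.biUnion fun i => (nbfin i).toFinset with hT
  let base : Fin s.card → I := fun k => ((s.equivFin).symm k).1
  let keyf : Fin s.card → ℝ := fun k => -((vI (base k)).1 + (vI (base k)).2)
  let π := Tuple.sort keyf
  let idx : Fin s.card → I := fun k => base (π k)
  have hidxs : ∀ k, idx k ∈ s := fun k => ((s.equivFin).symm (π k)).2
  have hidxinj : Function.Injective idx := by
    intro k k' h
    exact π.injective ((s.equivFin).symm.injective (Subtype.ext h))
  have hsum : ∀ {k k' : Fin s.card}, k' ≤ k →
      (vI (idx k)).1 + (vI (idx k)).2 ≤ (vI (idx k')).1 + (vI (idx k')).2 := by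
    intro k k' h
    have h2 : (keyf ∘ π) k' ≤ (keyf ∘ π) k := Tuple.monotone_sort keyf h
    have h3 : -((vI (idx k')).1 + (vI (idx k')).2) ≤ -((vI (idx k)).1 + (vI (idx k)).2) := h2
    linarith
  let Cm : Matrix (Fin s.card) {j // j ∈ T} K := fun k j => c (idx k) j.1
  let Dm : Matrix {j // j ∈ T} (Fin s.card) K := fun j k => d j.1 (idx k)
  have hP : ∀ k k' : Fin s.card, k' ≤ k → (Cm * Dm) k k' = if k = k' then 1 else 0 := by
    intro k k' hle
    have hF : ∀ j, c (idx k) j ≠ 0 → d j (idx k') ≠ 0 → j ∈ T := by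
      intro j hcj hdj
      have h1 := hc _ _ hcj
      have h2 := hd _ _ hdj
      by_cases hb : vI (idx k) ≤ wJ j + (ε, ε)
      · exact Finset.mem_biUnion.2 ⟨idx k, hidxs k, (nbfin _).mem_toFinset.2 ⟨h1, hb⟩⟩
      by_cases hb' : wJ j ≤ vI (idx k')
      · exact Finset.mem_biUnion.2 ⟨idx k', hidxs k', (nbfin _).mem_toFinset.2 ⟨hb', h2⟩⟩
      exfalso
      have hs := hsum hle
      rw [Prod.le_def, not_and_or] at hb hb'
      rw [Prod.le_def] at h1 h2
      simp only [Prod.fst_add, Prod.snd_add, not_le] at hb hb' h1 h2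
      obtain ⟨h11, h12⟩ := h1; obtain ⟨h21, h22⟩ := h2
      rcases hb with hb | hb <;> rcases hb' with hb' | hb' <;> linarith
    have hsumT : (Cm * Dm) k k' = ∑ j ∈ T, c (idx k) j * d j (idx k') := by
      rw [Matrix.mul_apply, ← Finset.sum_coe_sort T (fun j => c (idx k) j * d j (idx k'))]
    rw [hsumT, key _ _ _ hF]
    by_cases hkk : k = k'
    · simp [hkk]
    · have hne : idx k ≠ idx k' := fun hc' => hkk (hidxinj hc')
      simp [hkk, hne]
  have htri : (Cm * Dm).BlockTriangular id := by
    intro k k' hlt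
    have hne : k ≠ k' := ne_of_gt hlt
    rw [hP k k' (le_of_lt hlt), if_neg hne]
  have hdet : (Cm * Dm).det = 1 := by
    rw [Matrix.det_of_upperTriangular htri]
    refine Finset.prod_eq_one fun k _ => by rw [hP k k le_rfl, if_pos rfl]
  have hunit : IsUnit (Cm * Dm).det := by rw [hdet]; exact isUnit_one
  have h0 : ∀ z : Fin s.card → K, Dm.mulVec z = 0 → z = 0 := by
    intro z hz
    have h1 : (Cm * Dm).mulVec z = 0 := by
      rw [← Matrix.mulVec_mulVec, hz, Matrix.mulVec_zero]
    calc z = (1 : Matrix (Fin s.card) (Fin s.card) K).mulVec z := (Matrix.one_mulVec z).symm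
      _ = ((Cm * Dm)⁻¹ * (Cm * Dm)).mulVec z := by rw [Matrix.nonsing_inv_mul _ hunit]
      _ = (Cm * Dm)⁻¹.mulVec ((Cm * Dm).mulVec z) := (Matrix.mulVec_mulVec _ _ _).symm
      _ = 0 := by rw [h1, Matrix.mulVec_zero]
  have hDinj : Function.Injective Dm.mulVecLin := by
    intro x y hxy
    have h3 : Dm.mulVec (x - y) = 0 := by
      rw [← Matrix.mulVecLin_apply, map_sub, hxy, sub_self]
    exact sub_eq_zero.1 (h0 _ h3)
  have hle := LinearMap.finrank_le_finrank_of_injective hDinj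
  rwa [Module.finrank_pi, Module.finrank_pi, Fintype.card_fin, Fintype.card_coe] at hle

abbrev FreeDecomp (X : PersMod K (ℝ × ℝ)) :=
  DecompOver (fun J => ∃ v : ℝ × ℝ, J = Set.Ici v) X

section Decomp

variable {X : PersMod K (ℝ × ℝ)} (D : FreeDecomp X)

noncomputable def bvp (i : D.ι) : ℝ × ℝ := (D.mem i).choose

lemma memD_iff (i : D.ι) (a : ℝ × ℝ) : a ∈ D.B i ↔ bvp D i ≤ a := by
  conv_lhs => rw [(D.mem i).choose_spec]
  exact Iff.rfl

lemma bvp_mem (i : D.ι) : bvp D i ∈ D.B i := (memD_iff D i _).2 le_rfl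

lemma memD_mono {i : D.ι} {a c : ℝ × ℝ} (h : a ≤ c) (ha : a ∈ D.B i) : c ∈ D.B i := by
  rw [memD_iff] at *
  exact ha.trans h

open Classical in
/-- Extraction of the `i`-th coefficient at index `a`. -/
noncomputable def co (a : ℝ × ℝ) (i : D.ι) : X.V a →ₗ[K] K :=
  if h : a ∈ D.B i then
    { toFun := fun m => D.equiv a m i ⟨h⟩
      map_add' := fun m m' => by simp
      map_smul' := fun r m => by simp }
  else 0

lemma co_apply {a : ℝ × ℝ} {i : D.ι} (h : a ∈ D.B i) (m : X.V a) :
    co D a i m = D.equiv a m i ⟨h⟩ := by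
  rw [co, dif_pos h]
  rfl

lemma co_not_mem {a : ℝ × ℝ} {i : D.ι} (h : ¬ a ∈ D.B i) (m : X.V a) :
    co D a i m = 0 := by
  rw [co, dif_neg h]
  rfl

lemma co_ne_mem {a : ℝ × ℝ} {i : D.ι} {m : X.V a} (h : co D a i m ≠ 0) : a ∈ D.B i := by
  by_contra hm
  exact h (co_not_mem D hm m)

open Classical in
lemma co_map {a c : ℝ × ℝ} (h : a ≤ c) (m : X.V a) (i : D.ι) :
    co D c i (X.map h m) = if a ∈ D.B i then co D a i m else 0 := by
  classical
  by_cases hc : c ∈ D.B i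
  · rw [co_apply D hc, D.natural h m, DFinsupp.mapRange.linearMap_apply, DFinsupp.mapRange_apply]
    simp only [ivMap, LinearMap.coe_mk, AddHom.coe_mk]
    split_ifs with ha
    · rw [co_apply D ha]
    · rfl
  · have ha : ¬ a ∈ D.B i := fun ha => hc (memD_mono D h ha)
    rw [co_not_mem D hc, if_neg ha]

open Classical in
/-- The basis vector of index `i`, seen at index `a`. -/
noncomputable def bvec (a : ℝ × ℝ) (i : D.ι) : X.V a :=
  (D.equiv a).symm (DFinsupp.single i fun _ => (1 : K))

lemma co_bvec_self {a : ℝ × ℝ} {i : D.ι} (h : a ∈ D.B i) : co D a i (bvec D a i) = 1 := by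
  classical
  rw [co_apply D h, bvec, LinearEquiv.apply_symm_apply, DFinsupp.single_eq_same]

lemma co_bvec_ne {a : ℝ × ℝ} {i i' : D.ι} (h : i ≠ i') : co D a i' (bvec D a i) = 0 := by
  classical
  by_cases h' : a ∈ D.B i'
  · rw [co_apply D h', bvec, LinearEquiv.apply_symm_apply, DFinsupp.single_eq_of_ne h.symm]
    rfl
  · exact co_not_mem D h' _

lemma map_bvec {a c : ℝ × ℝ} (h : a ≤ c) {i : D.ι} (ha : a ∈ D.B i) :
    X.map h (bvec D a i) = bvec D c i := by
  classical
  apply (D.equiv c).injective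
  rw [bvec, bvec, D.natural h, LinearEquiv.apply_symm_apply, LinearEquiv.apply_symm_apply,
    DFinsupp.mapRange.linearMap_apply]
  ext i' p
  rw [DFinsupp.mapRange_apply]
  by_cases hii : i = i'
  · subst hii
    rw [DFinsupp.single_eq_same, DFinsupp.single_eq_same]
    simp [ivMap, ha]
  · rw [DFinsupp.single_eq_of_ne (Ne.symm hii), DFinsupp.single_eq_of_ne (Ne.symm hii)]
    simp [ivMap]

open Classical in
lemma mem_support_iff_co (a : ℝ × ℝ) (m : X.V a) (i : D.ι) :
    i ∈ (D.equiv a m).support ↔ co D a i m ≠ 0 := by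
  rw [DFinsupp.mem_support_iff]
  constructor
  · intro hne
    have hmem : a ∈ D.B i := by
      by_contra hm
      apply hne
      funext p
      exact absurd p.down hm
    rw [co_apply D hmem]
    intro h0
    apply hne
    funext p
    rw [Subsingleton.elim p (⟨hmem⟩ : PLift (a ∈ D.B i))]
    exact h0
  · intro hco
    have hmem : a ∈ D.B i := co_ne_mem D hco
    rw [co_apply D hmem] at hco
    intro h0
    exact hco (by rw [h0]; rfl)

open Classical in
lemma decomp (a : ℝ × ℝ) (m : X.V a) :
    m = ∑ i ∈ (D.equiv a m).support, co D a i m • bvec D a i := by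
  apply (D.equiv a).injective
  rw [map_sum]
  conv_lhs => rw [← DFinsupp.sum_single (f := D.equiv a m)]
  rw [DFinsupp.sum]
  refine Finset.sum_congr rfl fun i hi => ?_
  have hne : D.equiv a m i ≠ 0 := DFinsupp.mem_support_iff.1 hi
  have hmem : a ∈ D.B i := by
    by_contra hm
    apply hne
    funext p
    exact absurd p.down hm
  rw [map_smul, bvec, LinearEquiv.apply_symm_apply, co_apply D hmem, ← DFinsupp.single_smul]
  congr 1
  funext p
  rw [Subsingleton.elim p (⟨hmem⟩ : PLift (a ∈ D.B i))]
  simp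

lemma finite_memD (hX : X.pfd) (a : ℝ × ℝ) : {i : D.ι | a ∈ D.B i}.Finite := by
  classical
  haveI := hX a
  haveI : FiniteDimensional K (Π₀ i, PLift (a ∈ D.B i) → K) :=
    LinearEquiv.finiteDimensional (D.equiv a)
  rw [← Set.finite_coe_iff]
  have hli : LinearIndependent K
      (fun i : {i : D.ι // a ∈ D.B i} =>
        DFinsupp.single (β := fun i => PLift (a ∈ D.B i) → K) i.1 fun _ => (1 : K)) := by
    rw [linearIndependent_iff']
    intro t g hsum i hi
    have h1 := congrArg (fun z : Π₀ i : D.ι, PLift (a ∈ D.B i) → K => z i.1 ⟨i.2⟩) hsum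
    simp only [DFinsupp.finset_sum_apply, DFinsupp.smul_apply, Pi.smul_apply, smul_eq_mul,
      DFinsupp.zero_apply, Pi.zero_apply] at h1
    rw [Finset.sum_eq_single i] at h1
    · simpa [DFinsupp.single_eq_same] using h1
    · intro i' _ hne
      have hv : i'.1 ≠ i.1 := fun h => hne (Subtype.ext h)
      simp [DFinsupp.single_eq_of_ne hv.symm, hv]
    · intro h
      exact absurd hi h
  exact hli.finite

end Decomp

section Main

variable {M N : PersMod K (ℝ × ℝ)} {ε : ℝ}

lemma le_shift2 (hε : 0 ≤ ε) (a : ℝ × ℝ) : a ≤ a + (ε, ε) := by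
  rw [Prod.le_def]
  constructor <;> simp [hε]

variable (f : PersHom M N)

noncomputable def gm (hε : 0 ≤ ε) (hf : ∀ p, Function.Injective (f.app p))
    (hcok : CokerTrivial shf2 ε f) (a : ℝ × ℝ) : N.V a →ₗ[K] M.V (a + (ε, ε)) :=
  (LinearEquiv.ofInjective (f.app (a + (ε, ε))) (hf _)).symm.toLinearMap.comp
    (LinearMap.codRestrict (LinearMap.range (f.app (a + (ε, ε)))) (N.map (le_shift2 hε a))
      (fun n => by
        obtain ⟨mm, hmm⟩ := hcok a (le_shift2 hε a) n
        exact ⟨mm, hmm⟩))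

lemma f_gm (hε : 0 ≤ ε) (hf : ∀ p, Function.Injective (f.app p))
    (hcok : CokerTrivial shf2 ε f) (a : ℝ × ℝ) (n : N.V a) :
    f.app (a + (ε, ε)) (gm f hε hf hcok a n) = N.map (le_shift2 hε a) n := by
  show f.app (a + (ε, ε)) ((LinearEquiv.ofInjective (f.app (a + (ε, ε))) (hf _)).symm _) = _
  rw [← LinearEquiv.ofInjective_apply (f.app (a + (ε, ε))) (h := hf _),
    LinearEquiv.apply_symm_apply]
  rfl

lemma gm_f (hε : 0 ≤ ε) (hf : ∀ p, Function.Injective (f.app p))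
    (hcok : CokerTrivial shf2 ε f) (a : ℝ × ℝ) (m : M.V a) :
    gm f hε hf hcok a (f.app a m) = M.map (le_shift2 hε a) m := by
  apply hf (a + (ε, ε))
  rw [f_gm]
  exact (LinearMap.congr_fun (f.natural (le_shift2 hε a)) m).symm

lemma gm_nat (hε : 0 ≤ ε) (hf : ∀ p, Function.Injective (f.app p))
    (hcok : CokerTrivial shf2 ε f) {a c : ℝ × ℝ} (h : a ≤ c) (n : N.V a) :
    gm f hε hf hcok c (N.map h n) =
      M.map (add_le_add_left h (ε, ε)) (gm f hε hf hcok a n) := by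
  apply hf (c + (ε, ε))
  rw [f_gm]
  have h2 := LinearMap.congr_fun
    (f.natural (show a + (ε, ε) ≤ c + (ε, ε) from add_le_add_left h (ε, ε)))
    (gm f hε hf hcok a n)
  simp only [LinearMap.coe_comp, Function.comp_apply] at h2
  rw [h2, f_gm, ← LinearMap.comp_apply, ← N.map_comp, ← LinearMap.comp_apply, ← N.map_comp]

variable (DM : FreeDecomp M) (DN : FreeDecomp N)

noncomputable def cc (i : DM.ι) (j : DN.ι) : K :=
  co DN (bvp DM i) j (f.app (bvp DM i) (bvec DM (bvp DM i) i))

noncomputable def dd (hε : 0 ≤ ε) (hf : ∀ p, Function.Injective (f.app p))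
    (hcok : CokerTrivial shf2 ε f) (j : DN.ι) (i : DM.ι) : K :=
  co DM (bvp DN j + (ε, ε)) i (gm f hε hf hcok (bvp DN j) (bvec DN (bvp DN j) j))

lemma cc_ne {i : DM.ι} {j : DN.ι} (h : cc f DM DN i j ≠ 0) : bvp DN j ≤ bvp DM i :=
  (memD_iff DN j _).1 (co_ne_mem DN h)

lemma dd_ne (hε : 0 ≤ ε) (hf : ∀ p, Function.Injective (f.app p))
    (hcok : CokerTrivial shf2 ε f) {j : DN.ι} {i : DM.ι}
    (h : dd f DM DN hε hf hcok j i ≠ 0) : bvp DM i ≤ bvp DN j + (ε, ε) :=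
  (memD_iff DM i _).1 (co_ne_mem DM h)

open Classical in
lemma key1 (hε : 0 ≤ ε) (hf : ∀ p, Function.Injective (f.app p))
    (hcok : CokerTrivial shf2 ε f) (i i' : DM.ι) (F : Finset DN.ι)
    (hF : ∀ j, cc f DM DN i j ≠ 0 → dd f DM DN hε hf hcok j i' ≠ 0 → j ∈ F) :
    ∑ j ∈ F, cc f DM DN i j * dd f DM DN hε hf hcok j i' = if i = i' then 1 else 0 := by
  set a := bvp DM i with ha
  set m0 := f.app a (bvec DM a i) with hm0
  set s := (DN.equiv a m0).support with hs
  have hcs : ∀ j, cc f DM DN i j = co DN a j m0 := fun j => rfl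
  -- the sum over `F` equals the sum over `s`
  have step1 := Finset.sum_subset (f := fun j => cc f DM DN i j * dd f DM DN hε hf hcok j i')
      (Finset.subset_union_left (s₁ := F) (s₂ := s)) (by
    intro j hj hjF
    have hjs : j ∈ s := (Finset.mem_union.1 hj).resolve_left hjF
    have hcc : cc f DM DN i j ≠ 0 := by
      rw [hcs]
      exact (mem_support_iff_co DN a m0 j).1 hjs
    by_cases hd : dd f DM DN hε hf hcok j i' = 0
    · rw [hd, mul_zero]
    · exact absurd (hF j hcc hd) hjF)
  have step2 := Finset.sum_subset (f := fun j => cc f DM DN i j * dd f DM DN hε hf hcok j i')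
      (Finset.subset_union_right (s₁ := F) (s₂ := s)) (by
    intro j hj hjs
    have hz : cc f DM DN i j = 0 := by
      rw [hcs]
      by_contra hne
      exact hjs ((mem_support_iff_co DN a m0 j).2 hne)
    rw [hz, zero_mul])
  rw [step1, ← step2]
  -- compute the sum over `s`
  have main : co DM (a + (ε, ε)) i' (gm f hε hf hcok a m0) =
      ∑ j ∈ s, cc f DM DN i j * dd f DM DN hε hf hcok j i' := by
    conv_lhs => rw [decomp DN a m0]
    rw [map_sum, map_sum]
    refine Finset.sum_congr rfl fun j hj => ?_
    rw [map_smul, map_smul, smul_eq_mul, hcs]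
    congr 1
    have hmemj : a ∈ DN.B j := co_ne_mem DN ((mem_support_iff_co DN a m0 j).1 hj)
    have hwj : bvp DN j ≤ a := (memD_iff DN j a).1 hmemj
    rw [← map_bvec DN hwj (bvp_mem DN j), gm_nat f hε hf hcok hwj,
      co_map DM (add_le_add_left hwj (ε, ε))]
    split_ifs with hmem
    · rfl
    · rw [dd, co_not_mem DM hmem]
  rw [← main, hm0, gm_f, map_bvec DM (le_shift2 hε a) (ha ▸ bvp_mem DM i)]
  by_cases hii : i = i'
  · subst hii
    rw [co_bvec_self DM (memD_mono DM (le_shift2 hε a) (ha ▸ bvp_mem DM i)), if_pos rfl]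
  · rw [co_bvec_ne DM hii, if_neg hii]

open Classical in
lemma key2 (hε : 0 ≤ ε) (hf : ∀ p, Function.Injective (f.app p))
    (hcok : CokerTrivial shf2 ε f) (j j' : DN.ι) (F : Finset DM.ι)
    (hF : ∀ i, dd f DM DN hε hf hcok j i ≠ 0 → cc f DM DN i j' ≠ 0 → i ∈ F) :
    ∑ i ∈ F, dd f DM DN hε hf hcok j i * cc f DM DN i j' = if j = j' then 1 else 0 := by
  set b := bvp DN j with hb
  set u0 := gm f hε hf hcok b (bvec DN b j) with hu0
  set s := (DM.equiv (b + (ε, ε)) u0).support with hs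
  have hds : ∀ i, dd f DM DN hε hf hcok j i = co DM (b + (ε, ε)) i u0 := fun i => rfl
  have step1 := Finset.sum_subset (f := fun i => dd f DM DN hε hf hcok j i * cc f DM DN i j')
      (Finset.subset_union_left (s₁ := F) (s₂ := s)) (by
    intro i hi hiF
    have his : i ∈ s := (Finset.mem_union.1 hi).resolve_left hiF
    have hdd : dd f DM DN hε hf hcok j i ≠ 0 := by
      rw [hds]
      exact (mem_support_iff_co DM (b + (ε, ε)) u0 i).1 his
    by_cases hc : cc f DM DN i j' = 0
    · rw [hc, mul_zero]
    · exact absurd (hF i hdd hc) hiF)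
  have step2 := Finset.sum_subset (f := fun i => dd f DM DN hε hf hcok j i * cc f DM DN i j')
      (Finset.subset_union_right (s₁ := F) (s₂ := s)) (by
    intro i hi his
    have hz : dd f DM DN hε hf hcok j i = 0 := by
      rw [hds]
      by_contra hne
      exact his ((mem_support_iff_co DM (b + (ε, ε)) u0 i).2 hne)
    rw [hz, zero_mul])
  rw [step1, ← step2]
  have main : co DN (b + (ε, ε)) j' (f.app (b + (ε, ε)) u0) =
      ∑ i ∈ s, dd f DM DN hε hf hcok j i * cc f DM DN i j' := by
    conv_lhs => rw [decomp DM (b + (ε, ε)) u0]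
    rw [map_sum, map_sum]
    refine Finset.sum_congr rfl fun i hi => ?_
    rw [map_smul, map_smul, smul_eq_mul, hds]
    congr 1
    have hmemi : b + (ε, ε) ∈ DM.B i :=
      co_ne_mem DM ((mem_support_iff_co DM (b + (ε, ε)) u0 i).1 hi)
    have hvi : bvp DM i ≤ b + (ε, ε) := (memD_iff DM i _).1 hmemi
    rw [← map_bvec DM hvi (bvp_mem DM i)]
    have hnat := LinearMap.congr_fun (f.natural hvi) (bvec DM (bvp DM i) i)
    simp only [LinearMap.coe_comp, Function.comp_apply] at hnat
    rw [hnat, co_map DN hvi]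
    split_ifs with hmem
    · rfl
    · rw [cc, co_not_mem DN hmem]
  rw [← main, hu0, f_gm, map_bvec DN (le_shift2 hε b) (hb ▸ bvp_mem DN j)]
  by_cases hjj : j = j'
  · subst hjj
    rw [co_bvec_self DN (memD_mono DN (le_shift2 hε b) (hb ▸ bvp_mem DN j)), if_pos rfl]
  · rw [co_bvec_ne DN hjj, if_neg hjj]

end Main

end InducedMatchingAux

/-- **Induced Matching Theorem for Free 2-D Modules.**
Let `f : M → N` be a monomorphism of pointwise finite dimensional free
`ℝ²`-indexed persistence modules with `ε`-trivial cokernel.  Then there is a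
bijective matching `χ : B(M) ↛ B(N)` such that for each `⟨b⟩ ∈ B(M)`,
`χ(⟨b⟩) = ⟨b'⟩` with `bᵢ - ε ≤ b'ᵢ ≤ bᵢ` for `i ∈ {1,2}`. -/
theorem induced_matching_free_2d
    (K : Type) [Field K] (ε : ℝ) (hε : 0 ≤ ε)
    (M N : PersMod K (ℝ × ℝ)) (hM : M.pfd) (hN : N.pfd)
    (DM : DecompOver (fun J => ∃ v : ℝ × ℝ, J = Set.Ici v) M)
    (DN : DecompOver (fun J => ∃ v : ℝ × ℝ, J = Set.Ici v) N)
    (f : PersHom M N) (hf : ∀ p, Function.Injective (f.app p))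
    (hcok : CokerTrivial shf2 ε f) :
    ∃ σ : Matching DM.ι DN.ι,
      (∀ i, ∃ j, σ.R i j) ∧ (∀ j, ∃ i, σ.R i j) ∧
      (∀ i j, σ.R i j → ∀ v w : ℝ × ℝ, DM.B i = Set.Ici v → DN.B j = Set.Ici w →
        v.1 - ε ≤ w.1 ∧ w.1 ≤ v.1 ∧ v.2 - ε ≤ w.2 ∧ w.2 ≤ v.2) := by
  classical
  have nbfin1 : ∀ i : DM.ι,
      {j : DN.ι | bvp DN j ≤ bvp DM i ∧ bvp DM i ≤ bvp DN j + (ε, ε)}.Finite := by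
    intro i
    refine Set.Finite.subset (finite_memD DN hN (bvp DM i)) fun j hj => ?_
    exact (memD_iff DN j _).2 hj.1
  have nbfin2 : ∀ j : DN.ι,
      {i : DM.ι | bvp DM i ≤ bvp DN j + (ε, ε) ∧
        bvp DN j + (ε, ε) ≤ bvp DM i + (ε, ε)}.Finite := by
    intro j
    refine Set.Finite.subset (finite_memD DM hM (bvp DN j + (ε, ε))) fun i hi => ?_
    exact (memD_iff DM i _).2 hi.1
  have hall1 := hall_aux ε (fun i => bvp DM i) (fun j => bvp DN j)
    (cc f DM DN) (dd f DM DN hε hf hcok)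
    (fun i j h => cc_ne f DM DN h) (fun j i h => dd_ne f DM DN hε hf hcok h)
    (fun i i' F hF => key1 f DM DN hε hf hcok i i' F hF) nbfin1
  obtain ⟨φ, hφinj, hφmem⟩ := (Finset.all_card_le_biUnion_card_iff_exists_injective _).1 hall1
  have hall2 := hall_aux ε (fun j => bvp DN j + (ε, ε)) (fun i => bvp DM i)
    (fun j i => dd f DM DN hε hf hcok j i) (fun i j => cc f DM DN i j)
    (fun j i h => dd_ne f DM DN hε hf hcok h)
    (fun i j h => add_le_add_left (cc_ne f DM DN h) (ε, ε))
    (fun j j' F hF => key2 f DM DN hε hf hcok j j' F hF) nbfin2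
  obtain ⟨ψ, hψinj, hψmem⟩ := (Finset.all_card_le_biUnion_card_iff_exists_injective _).1 hall2
  have hφR : ∀ i, bvp DN (φ i) ≤ bvp DM i ∧ bvp DM i ≤ bvp DN (φ i) + (ε, ε) := fun i =>
    ((nbfin1 i).mem_toFinset).1 (hφmem i)
  have hψR : ∀ j, bvp DN j ≤ bvp DM (ψ j) ∧ bvp DM (ψ j) ≤ bvp DN j + (ε, ε) := by
    intro j
    have h := ((nbfin2 j).mem_toFinset).1 (hψmem j)
    exact ⟨le_of_add_le_add_right h.2, h.1⟩
  obtain ⟨e, hebij, heR⟩ := csb_rel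
    (fun i j => bvp DN j ≤ bvp DM i ∧ bvp DM i ≤ bvp DN j + (ε, ε)) φ hφinj hφR ψ hψinj hψR
  refine ⟨⟨fun i j => e i = j, fun h h' => h.symm.trans h',
    fun h h' => hebij.1 (h.trans h'.symm)⟩, fun i => ⟨e i, rfl⟩, fun j => hebij.2 j, ?_⟩
  intro i j hR v w hBv hBw
  have hv : bvp DM i = v := Set.Ici_injective ((DM.mem i).choose_spec.symm.trans hBv)
  have hw : bvp DN j = w := Set.Ici_injective ((DN.mem j).choose_spec.symm.trans hBw)
  have hrel := heR i
  rw [hR, hv, hw] at hrel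
  obtain ⟨h1, h2⟩ := hrel
  rw [Prod.le_def] at h1 h2
  simp only [Prod.fst_add, Prod.snd_add] at h2
  exact ⟨by linarith [h2.1], h1.1, by linarith [h2.2], h1.2⟩

end PersStab
end
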